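/- Let X ∈ Sⁿ be a symmetric matrix with x := λ(X), and let 𝒱 ⊂ ℝⁿ be an affine subspace containing x that is invariant under the action of the stabilizer Fix(x). Then the set {Uᵀ Diag(v) U : v ∈ 𝒱, U ∈ O(n), Uᵀ Diag(x) U = X} is an affine subspace of Sⁿ. -/

import Mathlib

open Matrix

section helpers
variable {n : ℕ} (x : Fin n → ℝ)

lemma conj_entry (Q : Matrix (Fin n) (Fin n) ℝ) (w : Fin n → ℝ) (a b : Fin n) :
    (Qᵀ * diagonal w * Q) a b = ∑ c, Q c a * (w c * Q c b) := by
  rw [mul_assoc, mul_apply]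
  exact Finset.sum_congr rfl fun c _ => by rw [transpose_apply, diagonal_mul]

lemma qblock_diag (Q : Matrix (Fin n) (Fin n) ℝ) (hQ : Qᵀ * Q = 1)
    (hQb : ∀ a b, x a ≠ x b → Q a b = 0) :
    Qᵀ * diagonal x * Q = diagonal x := by
  ext a b
  rw [conj_entry]
  have : ∀ c : Fin n, Q c a * (x c * Q c b) = x a * (Q c a * Q c b) := by
    intro c
    by_cases h : x c = x a
    · rw [h]; ring
    · rw [hQb c a h]; ring
  rw [Finset.sum_congr rfl fun c _ => this c, ← Finset.mul_sum]
  have h2 : ∑ c, Q c a * Q c b = (Qᵀ * Q) a b := by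
    rw [mul_apply]; exact Finset.sum_congr rfl fun c _ => rfl
  rw [h2, hQ]
  by_cases hab : a = b
  · subst hab; simp
  · simp [one_apply_ne hab, diagonal_apply_ne _ hab]

lemma blocktrace (Q : Matrix (Fin n) (Fin n) ℝ) (hQ : Qᵀ * Q = 1)
    (hQb : ∀ a b, x a ≠ x b → Q a b = 0) (u : Fin n → ℝ) (a : Fin n) :
    (∑ b, if x b = x a then (Qᵀ * diagonal u * Q) b b else 0)
      = ∑ c, if x c = x a then u c else 0 := by
  have hQ' : Q * Qᵀ = 1 := mul_eq_one_comm.mp hQ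
  have step1 : (∑ b, if x b = x a then (Qᵀ * diagonal u * Q) b b else 0)
      = ∑ b, ∑ c, if x b = x a then Q c b * (u c * Q c b) else 0 := by
    refine Finset.sum_congr rfl fun b _ => ?_
    by_cases h : x b = x a
    · rw [if_pos h, conj_entry]
      exact Finset.sum_congr rfl fun c _ => by rw [if_pos h]
    · rw [if_neg h]
      exact (Finset.sum_eq_zero fun c _ => by rw [if_neg h]).symm
  rw [step1, Finset.sum_comm]
  refine Finset.sum_congr rfl fun c _ => ?_
  by_cases h : x c = x a
  · rw [if_pos h]
    have : ∀ b : Fin n, (if x b = x a then Q c b * (u c * Q c b) else 0)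
        = u c * (Q c b * Q c b) := by
      intro b
      by_cases hb : x b = x a
      · rw [if_pos hb]; ring
      · rw [if_neg hb, hQb c b (by rw [h]; exact fun hh => hb hh.symm)]; ring
    rw [Finset.sum_congr rfl fun b _ => this b, ← Finset.mul_sum]
    have h2 : ∑ b, Q c b * Q c b = (Q * Qᵀ) c c := by
      rw [mul_apply]; exact Finset.sum_congr rfl fun b _ => rfl
    rw [h2, hQ', one_apply_eq, mul_one]
  · rw [if_neg h]
    refine Finset.sum_eq_zero fun b _ => ?_
    by_cases hb : x b = x a
    · rw [if_pos hb, hQb c b (by rw [hb]; exact h)]; ring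
    · rw [if_neg hb]

lemma null_const (Q N : Matrix (Fin n) (Fin n) ℝ) (u : Fin n → ℝ)
    (hQ : Qᵀ * Q = 1) (hQb : ∀ a b, x a ≠ x b → Q a b = 0)
    (hN : N = Qᵀ * diagonal u * Q) (a : Fin n) (ν : ℝ)
    (hscal : ∀ b c, x b = x a → x c = x a → N b c = if b = c then ν else 0) :
    u a = ν := by
  have hQ' : Q * Qᵀ = 1 := mul_eq_one_comm.mp hQ
  have hQN : Q * N = diagonal u * Q := by
    rw [hN, ← mul_assoc, ← mul_assoc, hQ', one_mul]
  by_contra hne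
  have hrow : ∀ b, Q a b = 0 := by
    intro b
    by_cases hxb : x b = x a
    · -- (Q*N) a b = ν * Q a b and also = u a * Q a b
      have e1 : (Q * N) a b = ν * Q a b := by
        rw [mul_apply]
        have : ∀ c : Fin n, Q a c * N c b = if c = b then ν * Q a b else 0 := by
          intro c
          by_cases hxc : x c = x a
          · rw [hscal c b hxc hxb]
            by_cases hcb : c = b
            · subst hcb; simp [mul_comm]
            · simp [hcb]
          · rw [hQb a c (by rw [← (show x b = x a from hxb)] at hxc ⊢; exact fun hh => hxc hh.symm)]
            by_cases hcb : c = b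
            · subst hcb; exact absurd hxb hxc
            · simp [hcb]
        rw [Finset.sum_congr rfl fun c _ => this c, Finset.sum_ite_eq' Finset.univ b]
        simp
      have e2 : (Q * N) a b = u a * Q a b := by
        rw [hQN, diagonal_mul]
      have := e1.symm.trans e2
      rcases mul_eq_mul_right_iff.mp this.symm with h | h
      · exact absurd h hne
      · exact h
    · exact hQb a b (fun hh => hxb hh.symm)
  have : (Q * Qᵀ) a a = 0 := by
    rw [mul_apply]
    exact Finset.sum_eq_zero fun b _ => by rw [hrow b]; simp
  rw [hQ', one_apply_eq] at this
  exact one_ne_zero this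

end helpers

lemma spectral_real {ι : Type} [Fintype ι] [DecidableEq ι] (N : Matrix ι ι ℝ)
    (hN : Nᵀ = N) : ∃ (Q : Matrix ι ι ℝ) (w : ι → ℝ),
      Qᵀ * Q = 1 ∧ N = Qᵀ * diagonal w * Q := by
  have hH : N.IsHermitian := by
    rw [Matrix.IsHermitian, conjTranspose_eq_transpose_of_trivial]
    simpa using hN
  refine ⟨(star (hH.eigenvectorUnitary : Matrix ι ι ℝ)), hH.eigenvalues, ?_, ?_⟩
  · have := (Matrix.mem_unitaryGroup_iff).mp (hH.eigenvectorUnitary).2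
    simpa [star_eq_conjTranspose, conjTranspose_eq_transpose_of_trivial] using this
  · have h := hH.spectral_theorem
    have : (RCLike.ofReal ∘ hH.eigenvalues : ι → ℝ) = hH.eigenvalues := by
      funext i; simp
    rw [this] at h
    convert h using 2
    simp [Unitary.conjStarAlgAut_apply, star_eq_conjTranspose, conjTranspose_eq_transpose_of_trivial]

lemma SD_aux : ∀ (k : ℕ) (ι : Type) (_i1 : Fintype ι) (_i2 : DecidableEq ι)
    (x : ι → ℝ) (N : Matrix ι ι ℝ), Fintype.card ι ≤ k → Nᵀ = N →
    (∀ a b, x a ≠ x b → N a b = 0) →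
    ∃ (Q : Matrix ι ι ℝ) (w : ι → ℝ), Qᵀ * Q = 1 ∧
      (∀ a b, x a ≠ x b → Q a b = 0) ∧ N = Qᵀ * diagonal w * Q := by
  intro k
  induction k with
  | zero =>
    intro ι _ _ x N hcard hN hb
    haveI : IsEmpty ι := Fintype.card_eq_zero_iff.mp (Nat.le_zero.mp hcard)
    refine ⟨1, 0, by simp, fun a b _ => isEmptyElim a, ?_⟩
    ext a b; exact isEmptyElim a
  | succ k ih =>
    intro ι _ _ x N hcard hN hb
    classical
    by_cases hconst : ∀ a b, x a = x b
    · obtain ⟨Q, w, h1, h2⟩ := spectral_real N hN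
      exact ⟨Q, w, h1, fun a b hab => absurd (hconst a b) hab, h2⟩
    · push_neg at hconst
      obtain ⟨a₀, b₀, hab⟩ := hconst
      set p : ι → Prop := fun a => x a = x a₀ with hp
      haveI : DecidablePred p := Classical.decPred p
      set e : ι ≃ {a // p a} ⊕ {a // ¬ p a} := (Equiv.sumCompl p).symm with he
      -- cardinalities
      have hcc := Fintype.card_subtype_compl p
      have hcle : Fintype.card {a // p a} ≤ Fintype.card ι := Fintype.card_subtype_le p
      have hcard1 : Fintype.card {a // p a} + Fintype.card {a // ¬ p a} = Fintype.card ι := by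
        omega
      have hne1 : 0 < Fintype.card {a // p a} := Fintype.card_pos_iff.mpr ⟨⟨a₀, rfl⟩⟩
      have hne2 : 0 < Fintype.card {a // ¬ p a} :=
        Fintype.card_pos_iff.mpr ⟨⟨b₀, fun h => hab h.symm⟩⟩
      have hc1 : Fintype.card {a // p a} ≤ k := by omega
      have hc2 : Fintype.card {a // ¬ p a} ≤ k := by omega
      -- blocks
      set A : Matrix {a // p a} {a // p a} ℝ := Matrix.of (fun a b => N a.1 b.1) with hA
      set B : Matrix {a // ¬ p a} {a // ¬ p a} ℝ := Matrix.of (fun a b => N a.1 b.1) with hB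
      have hAt : Aᵀ = A := by
        ext a b; have := congrFun (congrFun hN a.1) b.1; exact this
      have hBt : Bᵀ = B := by
        ext a b; have := congrFun (congrFun hN a.1) b.1; exact this
      obtain ⟨Q₁, w₁, hQ1, hQb1, hA1⟩ := ih {a // p a} inferInstance inferInstance (fun a => x a.1) A hc1 hAt
        (fun a b h => hb a.1 b.1 h)
      obtain ⟨Q₂, w₂, hQ2, hQb2, hB1⟩ := ih {a // ¬ p a} inferInstance inferInstance (fun a => x a.1) B hc2 hBt
        (fun a b h => hb a.1 b.1 h)
      set FB : Matrix _ _ ℝ := fromBlocks Q₁ 0 0 Q₂ with hFB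
      set Q : Matrix ι ι ℝ := FB.submatrix e e with hQ
      refine ⟨Q, Sum.elim w₁ w₂ ∘ e, ?_, ?_, ?_⟩
      · have h1 : FBᵀ * FB = 1 := by
          rw [hFB, fromBlocks_transpose, fromBlocks_multiply]
          simp [hQ1, hQ2, fromBlocks_one]
        calc Qᵀ * Q = (FBᵀ * FB).submatrix e e := by
              rw [hQ, transpose_submatrix]
              exact submatrix_mul_equiv FBᵀ FB (⇑e) e (⇑e)
          _ = (1 : Matrix _ _ ℝ).submatrix (⇑e) (⇑e) := by rw [h1]
          _ = 1 := submatrix_one_equiv e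
      · intro a b hxab
        have hea : (Equiv.sumCompl p) (e a) = a := (Equiv.sumCompl p).apply_symm_apply a
        have heb : (Equiv.sumCompl p) (e b) = b := (Equiv.sumCompl p).apply_symm_apply b
        show FB (e a) (e b) = 0
        rcases h1 : e a with s | s <;> rcases h2 : e b with t | t <;>
          rw [h1] at hea <;> rw [h2] at heb <;> simp at hea heb
        · exact hQb1 s t (by rw [hea, heb]; exact hxab)
        · rfl
        · rfl
        · exact hQb2 s t (by rw [hea, heb]; exact hxab)
      · have hN' : N.submatrix e.symm e.symm = fromBlocks A 0 0 B := by
          ext i j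
          rcases i with s | s <;> rcases j with t | t <;>
            simp only [submatrix_apply, fromBlocks_apply₁₁, fromBlocks_apply₁₂,
              fromBlocks_apply₂₁, fromBlocks_apply₂₂, he, Equiv.symm_symm]
          · rfl
          · show N s.1 t.1 = (0 : Matrix _ _ ℝ) s t
            rw [hb s.1 t.1 (by rw [s.2]; exact fun h => t.2 h.symm)]; rfl
          · show N s.1 t.1 = (0 : Matrix _ _ ℝ) s t
            rw [hb s.1 t.1 (by rw [t.2]; exact fun h => s.2 h)]; rfl
          · rfl
        have key : fromBlocks A 0 0 B = FBᵀ * diagonal (Sum.elim w₁ w₂) * FB := by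
          rw [hFB, fromBlocks_transpose, ← fromBlocks_diagonal, fromBlocks_multiply,
            fromBlocks_multiply]
          simp [← hA1, ← hB1]
        have : N = (fromBlocks A 0 0 B).submatrix e e := by
          rw [← hN']
          ext i j
          simp [he]
        rw [this, key, hQ, transpose_submatrix]
        rw [show diagonal (Sum.elim w₁ w₂ ∘ ⇑e) = (diagonal (Sum.elim w₁ w₂)).submatrix (⇑e) (⇑e)
          from (submatrix_diagonal_equiv (Sum.elim w₁ w₂) e).symm]
        rw [submatrix_mul_equiv FBᵀ (diagonal (Sum.elim w₁ w₂)) (⇑e) e (⇑e)]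
        rw [submatrix_mul_equiv (FBᵀ * diagonal (Sum.elim w₁ w₂)) FB (⇑e) e (⇑e)]

lemma SD {ι : Type} [Fintype ι] [DecidableEq ι] (x : ι → ℝ) (N : Matrix ι ι ℝ)
    (hN : Nᵀ = N) (hb : ∀ a b, x a ≠ x b → N a b = 0) :
    ∃ (Q : Matrix ι ι ℝ) (w : ι → ℝ), Qᵀ * Q = 1 ∧
      (∀ a b, x a ≠ x b → Q a b = 0) ∧ N = Qᵀ * diagonal w * Q :=
  SD_aux (Fintype.card ι) ι _ _ x N le_rfl hN hb

section main
variable {n : ℕ}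

/-- `a` lies in a "full" block: some element of `L` is non-constant on the block of `a`. -/
def FullP (x : Fin n → ℝ) (L : Submodule ℝ (Fin n → ℝ)) (a : Fin n) : Prop :=
  ∃ w ∈ L, ∃ b c, x b = x a ∧ x c = x a ∧ w b ≠ w c

/-- The candidate direction submodule, in diagonalized coordinates. -/
def bmod (x : Fin n → ℝ) (L : Submodule ℝ (Fin n → ℝ)) :
    Submodule ℝ (Matrix (Fin n) (Fin n) ℝ) where
  carrier := {N | (∀ a b, x a ≠ x b → N a b = 0) ∧ Nᵀ = N ∧
    (∀ a b, x a = x b → ¬ FullP x L a → ((a ≠ b → N a b = 0) ∧ N a a = N b b)) ∧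
    ∃ w ∈ L, ∀ a, (∑ b, if x b = x a then N b b else 0) = ∑ b, if x b = x a then w b else 0}
  add_mem' := by
    rintro N M ⟨h1, h2, h3, w1, hw1, h4⟩ ⟨g1, g2, g3, w2, hw2, g4⟩
    refine ⟨fun a b h => by simp [Matrix.add_apply, h1 a b h, g1 a b h],
      by rw [transpose_add, h2, g2],
      fun a b hxab hf => ⟨fun hne => by
        simp [Matrix.add_apply, (h3 a b hxab hf).1 hne, (g3 a b hxab hf).1 hne],
        by simp [Matrix.add_apply, (h3 a b hxab hf).2, (g3 a b hxab hf).2]⟩,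
      w1 + w2, L.add_mem hw1 hw2, fun a => ?_⟩
    have split : ∀ (f g : Fin n → ℝ),
        (∑ b, if x b = x a then f b + g b else 0)
          = (∑ b, if x b = x a then f b else 0) + (∑ b, if x b = x a then g b else 0) := by
      intro f g
      rw [← Finset.sum_add_distrib]
      refine Finset.sum_congr rfl fun b _ => ?_
      split_ifs <;> simp
    have l1 := split (fun b => N b b) (fun b => M b b)
    have l2 := split w1 w2
    simp only [Matrix.add_apply, Pi.add_apply]
    rw [l1, l2, h4 a, g4 a]
  zero_mem' := by
    refine ⟨fun a b _ => rfl, by simp, fun a b _ _ => ⟨fun _ => rfl, rfl⟩, 0, L.zero_mem,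
      fun a => ?_⟩
    simp
  smul_mem' := by
    rintro t N ⟨h1, h2, h3, w, hw, h4⟩
    refine ⟨fun a b h => by simp [Matrix.smul_apply, h1 a b h],
      by rw [transpose_smul, h2],
      fun a b hxab hf => ⟨fun hne => by simp [Matrix.smul_apply, (h3 a b hxab hf).1 hne],
        by simp [Matrix.smul_apply, (h3 a b hxab hf).2]⟩,
      t • w, L.smul_mem t hw, fun a => ?_⟩
    have split : ∀ (f : Fin n → ℝ),
        (∑ b, if x b = x a then t * f b else 0) = t * ∑ b, if x b = x a then f b else 0 := by
      intro f
      rw [Finset.mul_sum]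
      refine Finset.sum_congr rfl fun b _ => ?_
      split_ifs <;> simp
    simp only [Matrix.smul_apply, Pi.smul_apply, smul_eq_mul]
    rw [split (fun b => N b b), split w, h4 a]

variable {x : Fin n → ℝ} {L : Submodule ℝ (Fin n → ℝ)}

lemma swap_fixes (p q : Fin n) (h : x p = x q) : x ∘ (Equiv.swap p q) = x := by
  funext i
  simp only [Function.comp_apply, Equiv.swap_apply_def]
  split_ifs with h1 h2
  · rw [h1, h]
  · rw [h2, h]
  · rfl

lemma single_mem (hLinv : ∀ σ : Equiv.Perm (Fin n), x ∘ σ = x → ∀ w ∈ L, w ∘ σ ∈ L)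
    (a : Fin n) (hfull : FullP x L a) (p q : Fin n) (hp : x p = x a) (hq : x q = x a) :
    (Pi.single p (1:ℝ) - Pi.single q 1) ∈ L := by
  obtain ⟨w, hw, b, c, hb, hc, hbc⟩ := hfull
  -- step 1 : e_b - e_c ∈ L
  have step1 : (Pi.single b (1:ℝ) - Pi.single c 1) ∈ L := by
    have hmem : w - w ∘ (Equiv.swap b c) ∈ L :=
      L.sub_mem hw (hLinv _ (swap_fixes b c (hb.trans hc.symm)) w hw)
    have heq : w - w ∘ (Equiv.swap b c) = (w b - w c) • (Pi.single b (1:ℝ) - Pi.single c 1) := by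
      funext i
      simp only [Pi.sub_apply, Function.comp_apply, Pi.smul_apply, smul_eq_mul,
        Pi.single_apply, Equiv.swap_apply_def]
      split_ifs with h1 h2 <;> subst_eqs <;> ring_nf <;> simp_all
    have := L.smul_mem (w b - w c)⁻¹ hmem
    rw [heq, smul_smul, inv_mul_cancel₀ (sub_ne_zero.mpr hbc), one_smul] at this
    exact this
  -- step 2 : ∀ r with x r = x a, e_r - e_c ∈ L
  have step2 : ∀ r : Fin n, x r = x a → (Pi.single r (1:ℝ) - Pi.single c 1) ∈ L := by
    intro r hr
    by_cases hrc : r = c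
    · subst hrc; simpa using L.zero_mem
    by_cases hrb : r = b
    · subst hrb; exact step1
    have hcb : c ≠ b := fun h => hbc (by rw [h])
    have hmem := hLinv _ (swap_fixes b r (hb.trans hr.symm)) _ step1
    have heq : ((Pi.single b (1:ℝ) - Pi.single c 1 : Fin n → ℝ) ∘ (⇑(Equiv.swap b r)) : Fin n → ℝ)
        = (Pi.single r (1:ℝ) - Pi.single c 1 : Fin n → ℝ) := by
      funext i
      simp only [Function.comp_apply, Pi.sub_apply, Pi.single_apply, Equiv.swap_apply_def]
      split_ifs <;> subst_eqs <;> simp_all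
    rwa [heq] at hmem
  have hmem := L.sub_mem (step2 p hp) (step2 q hq)
  rwa [sub_sub_sub_cancel_right] at hmem

lemma zmem (hLinv : ∀ σ : Equiv.Perm (Fin n), x ∘ σ = x → ∀ w ∈ L, w ∘ σ ∈ L)
    (z : Fin n → ℝ)
    (h0 : ∀ a, ¬ FullP x L a → z a = 0)
    (hsum : ∀ a, (∑ b, if x b = x a then z b else 0) = 0) : z ∈ L := by
  by_cases hn : n = 0
  · subst hn
    have : z = 0 := funext fun i => isEmptyElim i
    rw [this]; exact L.zero_mem
  classical
  -- representative of each block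
  have hblocknonempty : ∀ a : Fin n, (Finset.univ.filter (fun b => x b = x a)).Nonempty :=
    fun a => ⟨a, by simp⟩
  set rep : Fin n → Fin n := fun a => (Finset.univ.filter (fun b => x b = x a)).min'
    (hblocknonempty a) with hrep
  have hrepx : ∀ a, x (rep a) = x a := by
    intro a
    have := (Finset.univ.filter (fun b => x b = x a)).min'_mem (hblocknonempty a)
    simpa using this
  have hrepeq : ∀ a b, x a = x b → rep a = rep b := by
    intro a b hab
    simp only [hrep]
    congr 1
    ext c
    simp [hab]
  have hzrep : z = ∑ a, z a • (Pi.single a (1:ℝ) - Pi.single (rep a) 1) := by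
    funext i
    rw [Finset.sum_apply]
    simp only [Pi.smul_apply, Pi.sub_apply, Pi.single_apply, smul_eq_mul]
    have e1 : ∀ a : Fin n, z a * ((if i = a then (1:ℝ) else 0) - if i = rep a then 1 else 0)
        = (if a = i then z a else 0) - (if rep a = i then z a else 0) := by
      intro a
      have c1 : (if i = a then (1:ℝ) else 0) = if a = i then 1 else 0 := by
        by_cases h : i = a
        · rw [if_pos h, if_pos h.symm]
        · rw [if_neg h, if_neg fun hh => h hh.symm]
      have c2 : (if i = rep a then (1:ℝ) else 0) = if rep a = i then 1 else 0 := by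
        by_cases h : i = rep a
        · rw [if_pos h, if_pos h.symm]
        · rw [if_neg h, if_neg fun hh => h hh.symm]
      rw [c1, c2]
      split_ifs <;> ring
    rw [Finset.sum_congr rfl fun a _ => e1 a, Finset.sum_sub_distrib,
      Fintype.sum_ite_eq' i z]
    have e3 : (∑ a, if rep a = i then z a else 0)
        = ∑ a ∈ Finset.univ.filter (fun a => rep a = i), z a := (Finset.sum_filter _ _).symm
    rw [e3]
    by_cases hri : rep i = i
    · have hfe : Finset.univ.filter (fun a => rep a = i)
          = Finset.univ.filter (fun b => x b = x i) := by
        ext a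
        simp only [Finset.mem_filter, Finset.mem_univ, true_and]
        constructor
        · intro h; rw [← h, hrepx a]
        · intro h; rw [hrepeq a i h, hri]
      rw [hfe, Finset.sum_filter]
      rw [hsum i]
      ring
    · have hfe : Finset.univ.filter (fun a => rep a = i) = ∅ := by
        ext a
        simp only [Finset.mem_filter, Finset.mem_univ, true_and, Finset.notMem_empty,
          iff_false]
        intro h
        exact hri (by rw [← hrepeq a i (by rw [← h, hrepx a]), h])
      rw [hfe]
      simp
  rw [hzrep]
  refine Submodule.sum_mem L fun a _ => ?_
  by_cases hfa : FullP x L a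
  · exact L.smul_mem _ (single_mem hLinv a hfa a (rep a) rfl (hrepx a))
  · rw [h0 a hfa, zero_smul]
    exact L.zero_mem


lemma full_congr {x : Fin n → ℝ} {L : Submodule ℝ (Fin n → ℝ)} {a b : Fin n}
    (hab : x a = x b) : FullP x L a ↔ FullP x L b := by
  unfold FullP
  rw [hab]

lemma conj_mem_bmod {x : Fin n → ℝ} {L : Submodule ℝ (Fin n → ℝ)}
    (Q : Matrix (Fin n) (Fin n) ℝ) (hQ : Qᵀ * Q = 1)
    (hQb : ∀ a b, x a ≠ x b → Q a b = 0) (w : Fin n → ℝ) (hw : w ∈ L) :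
    Qᵀ * diagonal w * Q ∈ bmod x L := by
  refine ⟨?_, ?_, ?_, w, hw, fun a => blocktrace x Q hQ hQb w a⟩
  · intro a b hab
    rw [conj_entry]
    refine Finset.sum_eq_zero fun c _ => ?_
    by_cases h : x c = x a
    · rw [hQb c b (by rw [h]; exact hab)]; ring
    · rw [hQb c a h]; ring
  · rw [transpose_mul, transpose_mul, transpose_transpose, diagonal_transpose, ← mul_assoc]
  · intro a b hxab hnf
    have hconst : ∀ p q, x p = x a → x q = x a → w p = w q := by
      intro p q hp hq
      by_contra hne
      exact hnf ⟨w, hw, p, q, hp, hq, hne⟩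
    have key : ∀ p q, x p = x a → (Qᵀ * diagonal w * Q) p q
        = w a * (1 : Matrix (Fin n) (Fin n) ℝ) p q := by
      intro p q hp
      rw [conj_entry]
      have hterm : ∀ c : Fin n, Q c p * (w c * Q c q) = w a * (Q c p * Q c q) := by
        intro c
        by_cases h : x c = x a
        · rw [hconst c a h rfl]; ring
        · rw [hQb c p (by rw [hp]; exact h)]; ring
      rw [Finset.sum_congr rfl fun c _ => hterm c, ← Finset.mul_sum]
      congr 1
      rw [← hQ, mul_apply]
      exact Finset.sum_congr rfl fun c _ => rfl
    constructor
    · intro hne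
      rw [key a b rfl, one_apply_ne hne, mul_zero]
    · rw [key a a rfl, key b b hxab.symm, one_apply_eq, one_apply_eq]

end main

lemma sandwich {n : ℕ} (P Z D : Matrix (Fin n) (Fin n) ℝ) :
    (Z * P)ᵀ * D * (Z * P) = Pᵀ * (Zᵀ * D * Z) * P := by
  simp only [transpose_mul, mul_assoc]

/-- Affine generation: if `𝒱 ⊂ ℝⁿ` is an affine subspace containing the nonincreasing
eigenvalue vector `x = λ(X)` of the symmetric matrix `X` and invariant under all coordinate
permutations fixing `x`, then `{Uᵀ Diag(v) U : v ∈ 𝒱, U ∈ Oⁿ_X}` is an affine subspace of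
the symmetric matrices. -/
theorem affine_generation (n : ℕ) (X : Matrix (Fin n) (Fin n) ℝ) (x : Fin n → ℝ)
    (hx : Antitone x)
    (U₀ : Matrix (Fin n) (Fin n) ℝ) (hU₀ : U₀ᵀ * U₀ = 1)
    (hX : X = U₀ᵀ * Matrix.diagonal x * U₀)
    (V : AffineSubspace ℝ (Fin n → ℝ)) (hxV : x ∈ V)
    (hVinv : ∀ σ : Equiv.Perm (Fin n), x ∘ σ = x →
      (fun v : Fin n → ℝ => v ∘ σ) '' (V : Set (Fin n → ℝ)) = (V : Set (Fin n → ℝ))) :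
    ∃ W : AffineSubspace ℝ (Matrix (Fin n) (Fin n) ℝ),
      (W : Set (Matrix (Fin n) (Fin n) ℝ)) =
        {M | ∃ (v : Fin n → ℝ) (U : Matrix (Fin n) (Fin n) ℝ),
          v ∈ V ∧ Uᵀ * U = 1 ∧ X = Uᵀ * Matrix.diagonal x * U ∧
          M = Uᵀ * Matrix.diagonal v * U} := by
  classical
  have hU₀' : U₀ * U₀ᵀ = 1 := mul_eq_one_comm.mp hU₀
  set L := V.direction with hL
  have hLinv : ∀ σ : Equiv.Perm (Fin n), x ∘ σ = x → ∀ w ∈ L, w ∘ σ ∈ L := by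
    intro σ hσ w hwL
    have hxw : (w + x : Fin n → ℝ) ∈ V := by
      have := AffineSubspace.vadd_mem_of_mem_direction (s := V) hwL hxV
      simpa using this
    have himg : ((w + x : Fin n → ℝ) ∘ σ) ∈ (V : Set (Fin n → ℝ)) := by
      rw [← hVinv σ hσ]
      exact Set.mem_image_of_mem _ hxw
    have hmem := AffineSubspace.vsub_mem_direction himg hxV
    have heq : ((w + x : Fin n → ℝ) ∘ σ) -ᵥ x = w ∘ σ := by
      rw [vsub_eq_sub]
      funext i
      have hxi : x (σ i) = x i := congrFun hσ i
      simp only [Pi.sub_apply, Function.comp_apply, Pi.add_apply]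
      rw [hxi]
      ring
    rwa [heq] at hmem
  let conj : Matrix (Fin n) (Fin n) ℝ →ₗ[ℝ] Matrix (Fin n) (Fin n) ℝ :=
    { toFun := fun M => U₀ * M * U₀ᵀ
      map_add' := fun M N => by rw [mul_add, add_mul]
      map_smul' := fun t M => by
        rw [RingHom.id_apply, Matrix.mul_smul, Matrix.smul_mul] }
  refine ⟨AffineSubspace.mk' X ((bmod x L).comap conj), ?_⟩
  ext M
  simp only [SetLike.mem_coe, Set.mem_setOf_eq]
  constructor
  · -- W ⊆ S
    intro hM
    have hmem : U₀ * (M - X) * U₀ᵀ ∈ bmod x L := by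
      have h := AffineSubspace.mem_mk'.mp hM
      rw [vsub_eq_sub] at h
      exact Submodule.mem_comap.mp h
    obtain ⟨h1, h2, h3, w₀, hw₀, h4⟩ := hmem
    obtain ⟨Q, u, hQ, hQb, hdec⟩ := SD x (U₀ * (M - X) * U₀ᵀ) h2 h1
    set N : Matrix (Fin n) (Fin n) ℝ := U₀ * (M - X) * U₀ᵀ with hN
    have hQ' : Q * Qᵀ = 1 := mul_eq_one_comm.mp hQ
    have htr : ∀ a, (∑ b, if x b = x a then N b b else 0)
        = ∑ b, if x b = x a then u b else 0 := by
      intro a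
      rw [show (∑ b, if x b = x a then N b b else 0)
          = ∑ b, if x b = x a then (Qᵀ * diagonal u * Q) b b else 0 from
        Finset.sum_congr rfl fun b _ => by rw [← hdec]]
      exact blocktrace x Q hQ hQb u a
    set z : Fin n → ℝ := u - w₀ with hz
    have hz0 : ∀ a, ¬ FullP x L a → z a = 0 := by
      intro a hnf
      have hNconst : ∀ b, x b = x a → N b b = N a a :=
        fun b hb => ((h3 a b hb.symm hnf).2).symm
      have hscal : ∀ b c, x b = x a → x c = x a → N b c = if b = c then N a a else 0 := by
        intro b c hb hc
        by_cases hbc : b = c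
        · subst hbc; rw [if_pos rfl]; exact hNconst b hb
        · rw [if_neg hbc]
          exact (h3 b c (hb.trans hc.symm) ((full_congr hb).not.mpr hnf)).1 hbc
      have hu : u a = N a a := null_const x Q N u hQ hQb hdec a (N a a) hscal
      have hw0const : ∀ p, x p = x a → w₀ p = w₀ a := by
        intro p hp
        by_contra hne
        exact hnf ⟨w₀, hw₀, p, a, hp, rfl, hne⟩
      have e1 : (∑ b, if x b = x a then N b b else 0)
          = N a a * ∑ b, if x b = x a then (1:ℝ) else 0 := by
        rw [Finset.mul_sum]
        refine Finset.sum_congr rfl fun b _ => ?_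
        by_cases h : x b = x a
        · rw [if_pos h, if_pos h, hNconst b h, mul_one]
        · rw [if_neg h, if_neg h, mul_zero]
      have e2 : (∑ b, if x b = x a then w₀ b else 0)
          = w₀ a * ∑ b, if x b = x a then (1:ℝ) else 0 := by
        rw [Finset.mul_sum]
        refine Finset.sum_congr rfl fun b _ => ?_
        by_cases h : x b = x a
        · rw [if_pos h, if_pos h, hw0const b h, mul_one]
        · rw [if_neg h, if_neg h, mul_zero]
      have e3 : (∑ b, if x b = x a then (1:ℝ) else 0) ≠ 0 := by
        have hpos : 0 < ∑ b, if x b = x a then (1:ℝ) else 0 := by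
          refine Finset.sum_pos' (fun b _ => by positivity) ⟨a, Finset.mem_univ a, ?_⟩
          rw [if_pos rfl]
          norm_num
        exact ne_of_gt hpos
      have := h4 a
      rw [e1, e2] at this
      have hNw : N a a = w₀ a := mul_right_cancel₀ e3 this
      show u a - w₀ a = 0
      rw [hu, hNw, sub_self]
    have hzsum : ∀ a, (∑ b, if x b = x a then z b else 0) = 0 := by
      intro a
      have split : (∑ b, if x b = x a then z b else 0)
          = (∑ b, if x b = x a then u b else 0) - ∑ b, if x b = x a then w₀ b else 0 := by
        rw [← Finset.sum_sub_distrib]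
        refine Finset.sum_congr rfl fun b _ => ?_
        by_cases h : x b = x a
        · rw [if_pos h, if_pos h, if_pos h]; rfl
        · rw [if_neg h, if_neg h, if_neg h, sub_zero]
      rw [split, ← htr a, h4 a, sub_self]
    have hzL : z ∈ L := zmem hLinv z hz0 hzsum
    have huL : u ∈ L := by
      have := L.add_mem hw₀ hzL
      rwa [hz, add_sub_cancel] at this
    have hQD : Qᵀ * diagonal x * Q = diagonal x := qblock_diag x Q hQ hQb
    have hNback : U₀ᵀ * N * U₀ = M - X := by
      rw [hN, ← mul_assoc, ← mul_assoc, hU₀, one_mul, mul_assoc, hU₀, mul_one]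
    refine ⟨x + u, Q * U₀, ?_, ?_, ?_, ?_⟩
    · have := AffineSubspace.vadd_mem_of_mem_direction (s := V) huL hxV
      simpa [add_comm] using this
    · rw [transpose_mul, mul_assoc, ← mul_assoc Qᵀ Q U₀, hQ, one_mul, hU₀]
    · rw [sandwich, hQD, ← hX]
    · have hdxu : diagonal (x + u) = diagonal x + (diagonal u : Matrix (Fin n) (Fin n) ℝ) := by
        ext a b
        by_cases h : a = b
        · subst h; simp
        · simp [diagonal_apply_ne _ h]
      have hmid : Qᵀ * diagonal (x + u) * Q = diagonal x + N := by
        rw [hdxu, mul_add, add_mul, hQD, ← hdec]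
      rw [sandwich, hmid, mul_add, add_mul, hNback, ← hX]
      abel
  · -- S ⊆ W
    rintro ⟨v, U, hv, hU, hXU, hM⟩
    rw [AffineSubspace.mem_mk', vsub_eq_sub, Submodule.mem_comap]
    show U₀ * (M - X) * U₀ᵀ ∈ bmod x L
    have hU' : U * Uᵀ = 1 := mul_eq_one_comm.mp hU
    obtain ⟨Q, hQdef⟩ : ∃ Q : Matrix (Fin n) (Fin n) ℝ, Q = U * U₀ᵀ := ⟨_, rfl⟩
    have hQt : Qᵀ = U₀ * Uᵀ := by
      rw [hQdef, transpose_mul, transpose_transpose]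
    have hQorth : Qᵀ * Q = 1 := by
      rw [hQt, hQdef, mul_assoc, ← mul_assoc Uᵀ U U₀ᵀ, hU, one_mul, hU₀']
    have hQ' : Q * Qᵀ = 1 := mul_eq_one_comm.mp hQorth
    have hQD : Qᵀ * diagonal x * Q = diagonal x := by
      rw [hQt, hQdef]
      calc U₀ * Uᵀ * diagonal x * (U * U₀ᵀ)
          = U₀ * (Uᵀ * diagonal x * U) * U₀ᵀ := by
            simp only [mul_assoc]
        _ = U₀ * X * U₀ᵀ := by rw [← hXU]
        _ = diagonal x := by
            rw [hX, ← mul_assoc, ← mul_assoc, hU₀', one_mul, mul_assoc, hU₀', mul_one]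
    have hcomm : diagonal x * Q = Q * diagonal x := by
      calc diagonal x * Q = Q * Qᵀ * diagonal x * Q := by rw [hQ', one_mul]
        _ = Q * (Qᵀ * diagonal x * Q) := by simp only [mul_assoc]
        _ = Q * diagonal x := by rw [hQD]
    have hQb : ∀ a b, x a ≠ x b → Q a b = 0 := by
      intro a b hab
      have := congrFun (congrFun hcomm a) b
      rw [diagonal_mul, mul_diagonal] at this
      have h2 : (x a - x b) * Q a b = 0 := by ring_nf; linarith [this]
      rcases mul_eq_zero.mp h2 with h | h
      · exact absurd (by linarith [sub_eq_zero.mp h] : x a = x b) hab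
      · exact h
    have hwL : v - x ∈ L := by
      have := AffineSubspace.vsub_mem_direction hv hxV
      rwa [vsub_eq_sub] at this
    have hkey : U₀ * (M - X) * U₀ᵀ = Qᵀ * diagonal (v - x) * Q := by
      have hMc : U₀ * M * U₀ᵀ = Qᵀ * diagonal v * Q := by
        rw [hM, hQt, hQdef]
        simp only [mul_assoc]
      have hXc : U₀ * X * U₀ᵀ = Qᵀ * diagonal x * Q := by
        rw [hQD, hX, ← mul_assoc, ← mul_assoc, hU₀', one_mul, mul_assoc, hU₀', mul_one]
      have hdvx : diagonal (v - x) = diagonal v - (diagonal x : Matrix (Fin n) (Fin n) ℝ) := by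
        ext a b
        by_cases h : a = b
        · subst h; simp
        · simp [diagonal_apply_ne _ h]
      calc U₀ * (M - X) * U₀ᵀ = U₀ * M * U₀ᵀ - U₀ * X * U₀ᵀ := by rw [mul_sub, sub_mul]
        _ = Qᵀ * diagonal v * Q - Qᵀ * diagonal x * Q := by rw [hMc, hXc]
        _ = Qᵀ * (diagonal v - diagonal x) * Q := by rw [mul_sub, sub_mul]
        _ = Qᵀ * diagonal (v - x) * Q := by rw [hdvx]
    rw [hkey]
    exact conj_mem_bmod Q hQorth hQb (v - x) hwL
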